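/- Let Λ(A,U) be the free graded-commutative algebra over a field on generators A of degree −3 and U of degree 2 (so A² = 0 and Λ(A,U) has basis {Uᵏ, AUᵏ : k ≥ 0}). Suppose λ : Λ(A,U) → Λ(A,U) ⊗ Λ(A,U) is a degree −5 linear map satisfying the Sullivan relation λ(a·b) = (1⊗μ)(λ(a)⊗b) + (μ⊗1)(a⊗λ(b)) for all a,b (where μ is the multiplication, in Sweedler notation λ(ab) = a₁⊗(a₂b) + (ab₁)⊗b₂), together with λ(1) = 0, λ(A) = 0, and λ(U) = A⊗1 + 1⊗A. Then for all k ≥ 0: λ(Uᵏ) = Σ_{i+j=k−1, i,j≥0} (AUⁱ⊗Uʲ + Uⁱ⊗AUʲ) and λ(AUᵏ) = Σ_{i+j=k−1, i,j≥0} AUⁱ⊗AUʲ. -/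

import Mathlib

open TensorProduct

/-- Corollary 2.3: Let `Λ(A,U)` be the free graded-commutative algebra over a
field on generators `A` (degree −3, so `A² = 0`) and `U` (degree 2), with basis
`{Uᵏ, AUᵏ : k ≥ 0}`; since `A` is odd and `U` even, the algebra is commutative.
If `λ` satisfies Sullivan's relation `λ(ab) = a₁⊗(a₂b) + (ab₁)⊗b₂` together with
`λ(1) = 0`, `λ(A) = 0`, `λ(U) = A⊗1 + 1⊗A`, then for all `k ≥ 0`:
`λ(Uᵏ) = Σ_{i+j=k−1} (AUⁱ⊗Uʲ + Uⁱ⊗AUʲ)` and `λ(AUᵏ) = Σ_{i+j=k−1} AUⁱ⊗AUʲ`. -/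
theorem stmt_6 {K R : Type*} [Field K] [CommRing R] [Algebra K R]
    (A U : R) (hA2 : A ^ 2 = 0)
    (b : Module.Basis (ℕ ⊕ ℕ) K R)
    (hb1 : ∀ k : ℕ, b (Sum.inl k) = U ^ k)
    (hb2 : ∀ k : ℕ, b (Sum.inr k) = A * U ^ k)
    (lam : R →ₗ[K] R ⊗[K] R)
    (sullivan : ∀ x y : R, lam (x * y)
      = TensorProduct.map LinearMap.id (LinearMap.mulRight K y) (lam x)
        + TensorProduct.map (LinearMap.mulLeft K x) LinearMap.id (lam y))
    (h1 : lam 1 = 0) (hA : lam A = 0)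
    (hU : lam U = A ⊗ₜ[K] 1 + 1 ⊗ₜ[K] A) :
    ∀ k : ℕ,
      lam (U ^ k)
          = (∑ i ∈ Finset.range k, ((A * U ^ i) ⊗ₜ[K] (U ^ (k - 1 - i))))
            + (∑ i ∈ Finset.range k, ((U ^ i) ⊗ₜ[K] (A * U ^ (k - 1 - i)))) ∧
      lam (A * U ^ k)
          = ∑ i ∈ Finset.range k, (A * U ^ i) ⊗ₜ[K] (A * U ^ (k - 1 - i)) := by
  have key : ∀ k : ℕ, lam (U ^ k)
      = (∑ i ∈ Finset.range k, ((A * U ^ i) ⊗ₜ[K] (U ^ (k - 1 - i))))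
        + (∑ i ∈ Finset.range k, ((U ^ i) ⊗ₜ[K] (A * U ^ (k - 1 - i)))) := by
    intro k
    induction k with
    | zero => simpa using h1
    | succ k ih =>
      rw [pow_succ', sullivan, hU, ih]
      simp only [map_add, TensorProduct.map_tmul, map_sum,
        LinearMap.mulRight_apply, LinearMap.mulLeft_apply, LinearMap.id_coe, id_eq,
        one_mul, Nat.add_sub_cancel]
      rw [Finset.sum_range_succ' (fun i => (A * U ^ i) ⊗ₜ[K] (U ^ (k - i))),
          Finset.sum_range_succ' (fun i => (U ^ i) ⊗ₜ[K] (A * U ^ (k - i)))]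
      have e1 : ∀ i ∈ Finset.range k,
          (U * (A * U ^ i)) ⊗ₜ[K] (U ^ (k - 1 - i)) = (A * U ^ (i+1)) ⊗ₜ[K] (U ^ (k - (i+1))) := by
        intro i hi
        have : k - (i + 1) = k - 1 - i := by omega
        rw [this]; ring_nf
      have e2 : ∀ i ∈ Finset.range k,
          (U * U ^ i) ⊗ₜ[K] (A * U ^ (k - 1 - i)) = (U ^ (i+1)) ⊗ₜ[K] (A * U ^ (k - (i+1))) := by
        intro i hi
        have : k - (i + 1) = k - 1 - i := by omega
        rw [this]; ring_nf
      rw [Finset.sum_congr rfl e1, Finset.sum_congr rfl e2]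
      simp only [pow_zero, mul_one, Nat.sub_zero]
      abel
  intro k
  refine ⟨key k, ?_⟩
  rw [sullivan, hA, key k]
  simp only [map_zero, map_add, map_sum, TensorProduct.map_tmul,
    LinearMap.mulLeft_apply, LinearMap.id_coe, id_eq, zero_add]
  have e1 : ∀ i ∈ Finset.range k,
      (A * (A * U ^ i)) ⊗ₜ[K] (U ^ (k - 1 - i)) = (0 : R ⊗[K] R) := by
    intro i hi
    have : A * (A * U ^ i) = 0 := by
      rw [← mul_assoc, ← sq, hA2, zero_mul]
    rw [this, TensorProduct.zero_tmul]
  rw [Finset.sum_congr rfl e1]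
  simp [mul_left_comm]
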